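/- arXiv:2111.05768 — 2 statements merged into one kernel-verified Lean document; each statement's English description precedes it below -/
import Mathlib

section
/- For all real numbers a, b ≥ 0, η₁, η₂ ≥ 0, and q > 1: (b − a)(η₂² b^{q−1} − η₁² a^{q−1}) ≥ ((q−1)/(32q²)) · (η₂ b^{q/2} − η₁ a^{q/2})² − 2·max{1, (q−1)^{−1}} · (η₂ − η₁)² · (b^q + a^q). -/
set_option maxHeartbeats 2000000

open Real

private lemma pow_bnd {y σ : ℝ} (hy : 0 ≤ y) (h0 : 0 ≤ σ) (h1 : σ ≤ 1) :
    y ^ σ ≤ σ * y + (1 - σ) := by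
  have h := Real.geom_mean_le_arith_mean2_weighted (w₁ := σ) (w₂ := 1 - σ) (p₁ := y)
    (p₂ := 1) h0 (by linarith) hy zero_le_one (by ring)
  simpa using h

private lemma lemA {u v s : ℝ} (hu : 0 ≤ u) (huv : u ≤ v) (hs : 0 < s) (hs1 : s ≤ 1) :
    s * (v - u) ^ 2 ≤ (v ^ s - u ^ s) * (v ^ (2 - s) - u ^ (2 - s)) := by
  have hv : 0 ≤ v := hu.trans huv
  rcases hv.eq_or_lt with hv0 | hv0
  · have hu0 : u = 0 := le_antisymm (hv0 ▸ huv) hu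
    rw [hu0, ← hv0]
    rw [Real.zero_rpow hs.ne', Real.zero_rpow (by intro h; nlinarith : (2:ℝ) - s ≠ 0)]
    norm_num
  · set y := u / v with hy
    have hy0 : 0 ≤ y := div_nonneg hu hv0.le
    have hy1 : y ≤ 1 := div_le_one_of_le₀ huv hv0.le
    have huyv : u = y * v := by rw [hy, div_mul_cancel₀ u hv0.ne']
    have hus : u ^ s = y ^ s * v ^ s := by rw [huyv, Real.mul_rpow hy0 hv0.le]
    have hus2 : u ^ (2 - s) = y ^ (2 - s) * v ^ (2 - s) := by
      rw [huyv, Real.mul_rpow hy0 hv0.le]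
    have k1 : y ^ s ≤ s * y + (1 - s) := pow_bnd hy0 hs.le hs1
    have k2 : y ^ (2 - s) ≤ y := by
      rcases hy0.eq_or_lt with h0 | h0
      · rw [← h0, Real.zero_rpow (by intro h; nlinarith : (2:ℝ) - s ≠ 0)]
      · calc y ^ (2 - s) ≤ y ^ (1:ℝ) :=
              Real.rpow_le_rpow_of_exponent_ge h0 hy1 (by linarith)
          _ = y := Real.rpow_one y
    have hvs : 0 < v ^ s := Real.rpow_pos_of_pos hv0 _
    have hvs2 : 0 < v ^ (2 - s) := Real.rpow_pos_of_pos hv0 _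
    have hprod : v ^ s * v ^ (2 - s) = v ^ 2 := by
      rw [← Real.rpow_add hv0, show s + (2 - s) = (2:ℝ) by ring]
      rw [show (2:ℝ) = ((2:ℕ):ℝ) by norm_num, Real.rpow_natCast]
    have A1 : v ^ s * (s * (1 - y)) ≤ v ^ s - u ^ s := by
      rw [hus]; nlinarith [k1, hvs]
    have A2 : v ^ (2 - s) * (1 - y) ≤ v ^ (2 - s) - u ^ (2 - s) := by
      rw [hus2]; nlinarith [k2, hvs2]
    have n1 : 0 ≤ v ^ s * (s * (1 - y)) :=
      mul_nonneg hvs.le (mul_nonneg hs.le (by linarith))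
    have n2 : 0 ≤ v ^ (2 - s) * (1 - y) :=
      mul_nonneg hvs2.le (by linarith)
    have hmul := mul_le_mul A1 A2 n2 (n1.trans A1)
    have hvu : v - u = v * (1 - y) := by rw [huyv]; ring
    calc s * (v - u) ^ 2 = v ^ s * (s * (1 - y)) * (v ^ (2 - s) * (1 - y)) := by
          rw [hvu]; linear_combination (-(s * (1 - y)^2)) * hprod
      _ ≤ (v ^ s - u ^ s) * (v ^ (2 - s) - u ^ (2 - s)) := hmul

private lemma bern {a b q : ℝ} (ha : 0 ≤ a) (hab : a ≤ b) (hq : 1 < q) :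
    q * ((b - a) * a ^ (q - 1)) ≤ b ^ q - a ^ q := by
  rcases ha.eq_or_lt with h0 | h0
  · rw [← h0, Real.zero_rpow (by intro h; nlinarith : q - 1 ≠ 0),
      Real.zero_rpow (by intro h; nlinarith : q ≠ 0)]
    simpa using Real.rpow_nonneg (h0 ▸ hab : (0:ℝ) ≤ b) q
  · have key := one_add_mul_self_le_rpow_one_add
      (show (-1:ℝ) ≤ b / a - 1 by
        have : 0 ≤ b / a := div_nonneg (ha.trans hab) ha
        linarith) hq.le
    rw [show (1:ℝ) + (b / a - 1) = b / a by ring] at key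
    rw [Real.div_rpow (ha.trans hab) ha] at key
    have haq : 0 < a ^ q := Real.rpow_pos_of_pos h0 q
    have haq1 : a ^ q = a ^ (q - 1) * a := by
      rw [show q = q - 1 + 1 by ring, Real.rpow_add_one h0.ne']
      ring_nf
    have hmul := mul_le_mul_of_nonneg_right key haq.le
    have e1 : b ^ q / a ^ q * a ^ q = b ^ q := by field_simp
    have e2 : (1 + q * (b / a - 1)) * a ^ q = a ^ q + q * ((b - a) * a ^ (q - 1)) := by
      rw [haq1]; field_simp
    rw [e1, e2] at hmul
    linarith


private lemma kq1 {q : ℝ} (hq : 1 < q) : 0 ≤ 32 * q ^ 2 - 4 * q + 4 := by nlinarith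
private lemma kq2 {q : ℝ} (hq : 1 < q) : 0 ≤ 64 * q ^ 2 - 2 * q + 2 := by nlinarith
private lemma kq3 {q : ℝ} (hq : 1 < q) (hq2 : q ≤ 2) :
    0 ≤ (368 * q ^ 2 - 112 * q ^ 3) / 9 := by nlinarith
private lemma kq4 {q : ℝ} (hq : 1 < q) (hq2 : q ≤ 2) :
    0 ≤ 64 * q ^ 2 * (2 - q) / 9 := by nlinarith
private lemma kq5 {q : ℝ} (hq : 1 < q) :
    0 ≤ 28 * q ^ 2 * (8 * q - 7) / 9 + 8 * q - 4 := by nlinarith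
private lemma kq6 {q : ℝ} (hq : 1 < q) : 0 ≤ 62 * q ^ 2 + 4 * q - 2 := by nlinarith
private lemma kq7 {x y : ℝ} (h1 : 0 ≤ x) (h2 : x ≤ y) :
    0 ≤ 2 * x * (y - x) + (y - x) ^ 2 := by nlinarith

private lemma main_aux (a b η₁ η₂ q : ℝ) (ha : 0 ≤ a) (hab : a ≤ b)
    (hη₁ : 0 ≤ η₁) (hη₂ : 0 ≤ η₂) (hq : 1 < q) :
    (q - 1) / (32 * q ^ 2) * (η₂ * b ^ (q / 2) - η₁ * a ^ (q / 2)) ^ 2 -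
        2 * max 1 (q - 1)⁻¹ * (η₂ - η₁) ^ 2 * (b ^ q + a ^ q) ≤
      (b - a) * (η₂ ^ 2 * b ^ (q - 1) - η₁ ^ 2 * a ^ (q - 1)) := by
  have hb : 0 ≤ b := ha.trans hab
  have hq0 : 0 < q := by linarith
  set A := a ^ (q / 2) with hAdef
  set B := b ^ (q / 2) with hBdef
  set p1 := a ^ (q - 1) with hp1def
  set p2 := b ^ (q - 1) with hp2def
  have hA0 : 0 ≤ A := Real.rpow_nonneg ha _
  have hB0 : 0 ≤ B := Real.rpow_nonneg hb _
  have hAB : A ≤ B := Real.rpow_le_rpow ha hab (by positivity)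
  have hp10 : 0 ≤ p1 := Real.rpow_nonneg ha _
  have hp12 : p1 ≤ p2 := Real.rpow_le_rpow ha hab (by linarith)
  have haq : A ^ 2 = a ^ q := by
    rw [hAdef, ← Real.rpow_natCast (a ^ (q / 2)) 2, ← Real.rpow_mul ha]
    norm_num
  have hbq : B ^ 2 = b ^ q := by
    rw [hBdef, ← Real.rpow_natCast (b ^ (q / 2)) 2, ← Real.rpow_mul hb]
    norm_num
  have hW1 : q * ((b - a) * p1) ≤ B ^ 2 - A ^ 2 := by
    rw [haq, hbq]; exact bern ha hab hq
  have hW0 : 0 ≤ (b - a) * p1 := mul_nonneg (by linarith) hp10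
  have hP2 : 0 ≤ (b - a) * p2 := mul_nonneg (by linarith) (hp10.trans hp12)
  have hbp2 : b * p2 = B ^ 2 := by
    rw [hbq]
    calc b * p2 = b ^ (q - 1) * b ^ (1:ℝ) := by rw [Real.rpow_one]; ring
      _ = b ^ (q - 1 + 1) := (Real.rpow_add' hb (by simpa using hq0.ne')).symm
      _ = b ^ q := by ring_nf
  have hW2 : (b - a) * p1 ≤ B ^ 2 := by
    have h1 : (b - a) * p1 ≤ b * p2 :=
      mul_le_mul (by linarith) hp12 hp10 hb
    linarith [h1, hbp2]
  have eB1 : B ^ (2 / q) = b := by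
    rw [hBdef, ← Real.rpow_mul hb, show q / 2 * (2 / q) = 1 by field_simp, Real.rpow_one]
  have eA1 : A ^ (2 / q) = a := by
    rw [hAdef, ← Real.rpow_mul ha, show q / 2 * (2 / q) = 1 by field_simp, Real.rpow_one]
  have eB2 : B ^ (2 - 2 / q) = p2 := by
    rw [hBdef, ← Real.rpow_mul hb, show q / 2 * (2 - 2 / q) = q - 1 by field_simp]
  have eA2 : A ^ (2 - 2 / q) = p1 := by
    rw [hAdef, ← Real.rpow_mul ha, show q / 2 * (2 - 2 / q) = q - 1 by field_simp]
  rcases le_or_gt 2 q with hq2 | hq2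
  · -- case 2 ≤ q
    have hmax : max 1 (q - 1)⁻¹ = 1 := max_eq_left (by
      rw [inv_le_one_iff₀]; right; linarith)
    have hlem := lemA hA0 hAB (by positivity : (0:ℝ) < 2 / q)
      (by rw [div_le_one hq0]; linarith)
    rw [eB1, eA1, eB2, eA2] at hlem
    have hZ : 2 * (B - A) ^ 2 ≤ q * ((b - a) * (p2 - p1)) := by
      have h := mul_le_mul_of_nonneg_left hlem hq0.le
      have e : q * (2 / q * (B - A) ^ 2) = 2 * (B - A) ^ 2 := by field_simp
      linarith [h, e]
    rw [hmax, ← haq, ← hbq]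
    have h32 : (0:ℝ) < 32 * q ^ 2 := by positivity
    rcases le_total η₂ η₁ with hee | hee
    · -- anti-aligned
      have hc1 : 0 ≤ 32 * q * η₂ ^ 2 * (q * ((b - a) * (p2 - p1)) - 2 * (B - A) ^ 2) :=
        mul_nonneg (by positivity) (by linarith)
      have hc2 : 0 ≤ 64 * q * η₂ * (η₁ - η₂) * (B ^ 2 - A ^ 2 - q * ((b - a) * p1)) :=
        mul_nonneg (mul_nonneg (by positivity) (by linarith)) (by linarith)
      have hc3 : 0 ≤ 32 * q ^ 2 * (η₁ - η₂) ^ 2 * (B ^ 2 - (b - a) * p1) :=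
        mul_nonneg (by positivity) (by linarith)
      have hc4 : 0 ≤ (8 * η₂ * (B - A) - 4 * q * (η₁ - η₂) * (A + B)) ^ 2 := sq_nonneg _
      have hc5 : 0 ≤ 2 * (q - 1) * (η₂ * (B - A) + (η₁ - η₂) * A) ^ 2 :=
        mul_nonneg (by linarith) (sq_nonneg _)
      have hc6 : 0 ≤ 16 * q ^ 2 * ((η₁ - η₂) * (A - B)) ^ 2 := by positivity
      have hc7 : 0 ≤ (q - 1) * (η₂ * (B - A) - (η₁ - η₂) * A) ^ 2 :=
        mul_nonneg (by linarith) (sq_nonneg _)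
      have hc8 : 0 ≤ 60 * (q - 1) * (η₂ * (B - A)) ^ 2 :=
        mul_nonneg (by linarith) (sq_nonneg _)
      have hc9 : 0 ≤ (32 * q ^ 2 - 4 * q + 4) * ((η₁ - η₂) * A) ^ 2 :=
        mul_nonneg (kq1 hq) (sq_nonneg _)
      have key : 0 ≤ 32 * q ^ 2 * ((b - a) * (η₂ ^ 2 * p2 - η₁ ^ 2 * p1)
          + 2 * (η₂ - η₁) ^ 2 * (B ^ 2 + A ^ 2)) - (q - 1) * (η₂ * B - η₁ * A) ^ 2 := by
        have hEq : 32 * q ^ 2 * ((b - a) * (η₂ ^ 2 * p2 - η₁ ^ 2 * p1)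
            + 2 * (η₂ - η₁) ^ 2 * (B ^ 2 + A ^ 2)) - (q - 1) * (η₂ * B - η₁ * A) ^ 2 =
            32 * q * η₂ ^ 2 * (q * ((b - a) * (p2 - p1)) - 2 * (B - A) ^ 2)
            + 64 * q * η₂ * (η₁ - η₂) * (B ^ 2 - A ^ 2 - q * ((b - a) * p1))
            + 32 * q ^ 2 * (η₁ - η₂) ^ 2 * (B ^ 2 - (b - a) * p1)
            + (8 * η₂ * (B - A) - 4 * q * (η₁ - η₂) * (A + B)) ^ 2
            + 2 * (q - 1) * (η₂ * (B - A) + (η₁ - η₂) * A) ^ 2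
            + 16 * q ^ 2 * ((η₁ - η₂) * (A - B)) ^ 2
            + (q - 1) * (η₂ * (B - A) - (η₁ - η₂) * A) ^ 2
            + 60 * (q - 1) * (η₂ * (B - A)) ^ 2
            + (32 * q ^ 2 - 4 * q + 4) * ((η₁ - η₂) * A) ^ 2 := by ring
        rw [hEq]
        have := add_nonneg (add_nonneg (add_nonneg (add_nonneg (add_nonneg (add_nonneg
          (add_nonneg (add_nonneg hc1 hc2) hc3) hc4) hc5) hc6) hc7) hc8) hc9
        exact this
      have expand : (b - a) * (η₂ ^ 2 * p2 - η₁ ^ 2 * p1) -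
          ((q - 1) / (32 * q ^ 2) * (η₂ * B - η₁ * A) ^ 2
            - 2 * 1 * (η₂ - η₁) ^ 2 * (B ^ 2 + A ^ 2)) =
          (32 * q ^ 2 * ((b - a) * (η₂ ^ 2 * p2 - η₁ ^ 2 * p1)
            + 2 * (η₂ - η₁) ^ 2 * (B ^ 2 + A ^ 2))
            - (q - 1) * (η₂ * B - η₁ * A) ^ 2) / (32 * q ^ 2) := by
        field_simp
        ring
      have hpos := div_nonneg key h32.le
      rw [← sub_nonneg, expand]
      exact hpos
    · -- aligned
      have ha1 : 0 ≤ 32 * q * η₁ ^ 2 * (q * ((b - a) * (p2 - p1)) - 2 * (B - A) ^ 2) :=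
        mul_nonneg (by positivity) (by linarith)
      have ha2 : 0 ≤ 32 * q ^ 2 * (2 * η₁ * (η₂ - η₁) + (η₂ - η₁) ^ 2) * ((b - a) * p2) :=
        mul_nonneg (mul_nonneg (by positivity) (kq7 hη₁ hee)) hP2
      have ha3 : 0 ≤ (q - 1) * (η₁ * (B - A) - (η₂ - η₁) * B) ^ 2 :=
        mul_nonneg (by linarith) (sq_nonneg _)
      have ha4 : 0 ≤ (62 * q + 2) * (η₁ * (B - A)) ^ 2 :=
        mul_nonneg (by linarith) (sq_nonneg _)
      have ha5 : 0 ≤ (64 * q ^ 2 - 2 * q + 2) * ((η₂ - η₁) * B) ^ 2 :=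
        mul_nonneg (kq2 hq) (sq_nonneg _)
      have ha6 : 0 ≤ 64 * q ^ 2 * ((η₂ - η₁) * A) ^ 2 := by positivity
      have key : 0 ≤ 32 * q ^ 2 * ((b - a) * (η₂ ^ 2 * p2 - η₁ ^ 2 * p1)
          + 2 * (η₂ - η₁) ^ 2 * (B ^ 2 + A ^ 2)) - (q - 1) * (η₂ * B - η₁ * A) ^ 2 := by
        have hEq : 32 * q ^ 2 * ((b - a) * (η₂ ^ 2 * p2 - η₁ ^ 2 * p1)
            + 2 * (η₂ - η₁) ^ 2 * (B ^ 2 + A ^ 2)) - (q - 1) * (η₂ * B - η₁ * A) ^ 2 =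
            32 * q * η₁ ^ 2 * (q * ((b - a) * (p2 - p1)) - 2 * (B - A) ^ 2)
            + 32 * q ^ 2 * (2 * η₁ * (η₂ - η₁) + (η₂ - η₁) ^ 2) * ((b - a) * p2)
            + (q - 1) * (η₁ * (B - A) - (η₂ - η₁) * B) ^ 2
            + (62 * q + 2) * (η₁ * (B - A)) ^ 2
            + (64 * q ^ 2 - 2 * q + 2) * ((η₂ - η₁) * B) ^ 2
            + 64 * q ^ 2 * ((η₂ - η₁) * A) ^ 2 := by ring
        rw [hEq]
        have := add_nonneg (add_nonneg (add_nonneg (add_nonneg (add_nonneg ha1 ha2)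
          ha3) ha4) ha5) ha6
        exact this
      have expand : (b - a) * (η₂ ^ 2 * p2 - η₁ ^ 2 * p1) -
          ((q - 1) / (32 * q ^ 2) * (η₂ * B - η₁ * A) ^ 2
            - 2 * 1 * (η₂ - η₁) ^ 2 * (B ^ 2 + A ^ 2)) =
          (32 * q ^ 2 * ((b - a) * (η₂ ^ 2 * p2 - η₁ ^ 2 * p1)
            + 2 * (η₂ - η₁) ^ 2 * (B ^ 2 + A ^ 2))
            - (q - 1) * (η₂ * B - η₁ * A) ^ 2) / (32 * q ^ 2) := by
        field_simp
        ring
      have hpos := div_nonneg key h32.le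
      rw [← sub_nonneg, expand]
      exact hpos
  · -- case q < 2
    have hq1 : 0 < q - 1 := by linarith
    have hmax : max 1 (q - 1)⁻¹ = (q - 1)⁻¹ :=
      max_eq_right (one_le_inv_iff₀.mpr ⟨hq1, by linarith⟩)
    have hlem := lemA hA0 hAB
      (by
        have h2q : 2 / q < 2 := by rw [div_lt_iff₀ hq0]; linarith
        linarith : (0:ℝ) < 2 - 2 / q)
      (by
        have h2q : (1:ℝ) ≤ 2 / q := by rw [le_div_iff₀ hq0]; linarith
        linarith : 2 - 2 / q ≤ 1)
    rw [show (2:ℝ) - (2 - 2 / q) = 2 / q by ring] at hlem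
    rw [eB1, eA1, eB2, eA2] at hlem
    have hZ : 2 * (q - 1) * (B - A) ^ 2 ≤ q * ((b - a) * (p2 - p1)) := by
      have h := mul_le_mul_of_nonneg_left hlem hq0.le
      have e0 : q * (2 - 2 / q) = 2 * (q - 1) := by
        field_simp
      have e : q * ((2 - 2 / q) * (B - A) ^ 2) = 2 * (q - 1) * (B - A) ^ 2 := by
        rw [← mul_assoc, e0]
      linarith [h, e]
    rw [hmax, ← haq, ← hbq]
    have h32 : (0:ℝ) < 32 * q ^ 2 * (q - 1) := by positivity
    rcases le_total η₂ η₁ with hee | hee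
    · -- anti-aligned
      have hs1 : 0 ≤ 32 * q * (q - 1) * η₂ ^ 2 *
          (q * ((b - a) * (p2 - p1)) - 2 * (q - 1) * (B - A) ^ 2) :=
        mul_nonneg (by positivity) (by linarith)
      have hs2 : 0 ≤ 64 * q * (q - 1) * η₂ * (η₁ - η₂) *
          (B ^ 2 - A ^ 2 - q * ((b - a) * p1)) :=
        mul_nonneg (mul_nonneg (by positivity) (by linarith)) (by linarith)
      have hs3 : 0 ≤ 32 * q ^ 2 * (q - 1) * (η₁ - η₂) ^ 2 * (B ^ 2 - (b - a) * p1) :=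
        mul_nonneg (by positivity) (by linarith)
      have hs4 : 0 ≤ 2 * (q - 1) ^ 2 * (η₂ * (B - A) + (η₁ - η₂) * A) ^ 2 := by positivity
      have hs5 : 0 ≤ (q - 1) ^ 2 * (η₂ * (B - A) - (η₁ - η₂) * A) ^ 2 := by positivity
      have hs6 : 0 ≤ (q - 1) *
          (8 * (q - 1) * η₂ * (B - A) - 4 * q * (η₁ - η₂) * (A + B)) ^ 2 :=
        mul_nonneg (by linarith) (sq_nonneg _)
      have hs7 : 0 ≤ (2 - q) / 9 *
          (18 * (q - 1) * η₂ * (B - A) - 16 * q * (η₁ - η₂) * (A + B)) ^ 2 :=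
        mul_nonneg (by linarith) (sq_nonneg _)
      have hs8 : 0 ≤ 12 * (q - 1) ^ 2 * (3 * q - 1) * (η₂ * (B - A)) ^ 2 :=
        mul_nonneg (mul_nonneg (by positivity) (by linarith)) (sq_nonneg _)
      have hs9 : 0 ≤ (368 * q ^ 2 - 112 * q ^ 3) / 9 * ((η₁ - η₂) * (A - B)) ^ 2 :=
        mul_nonneg (kq3 hq hq2.le) (sq_nonneg _)
      have hs10 : 0 ≤ 64 * q ^ 2 * (2 - q) / 9 * ((η₁ - η₂) * B) ^ 2 :=
        mul_nonneg (kq4 hq hq2.le) (sq_nonneg _)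
      have hs11 : 0 ≤ (28 * q ^ 2 * (8 * q - 7) / 9 + 8 * q - 4) * ((η₁ - η₂) * A) ^ 2 :=
        mul_nonneg (kq5 hq) (sq_nonneg _)
      have key : 0 ≤ 32 * q ^ 2 * (q - 1) * ((b - a) * (η₂ ^ 2 * p2 - η₁ ^ 2 * p1))
          + 64 * q ^ 2 * (η₂ - η₁) ^ 2 * (B ^ 2 + A ^ 2)
          - (q - 1) ^ 2 * (η₂ * B - η₁ * A) ^ 2 := by
        have hEq : 32 * q ^ 2 * (q - 1) * ((b - a) * (η₂ ^ 2 * p2 - η₁ ^ 2 * p1))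
            + 64 * q ^ 2 * (η₂ - η₁) ^ 2 * (B ^ 2 + A ^ 2)
            - (q - 1) ^ 2 * (η₂ * B - η₁ * A) ^ 2 =
            32 * q * (q - 1) * η₂ ^ 2 *
              (q * ((b - a) * (p2 - p1)) - 2 * (q - 1) * (B - A) ^ 2)
            + 64 * q * (q - 1) * η₂ * (η₁ - η₂) *
              (B ^ 2 - A ^ 2 - q * ((b - a) * p1))
            + 32 * q ^ 2 * (q - 1) * (η₁ - η₂) ^ 2 * (B ^ 2 - (b - a) * p1)
            + 2 * (q - 1) ^ 2 * (η₂ * (B - A) + (η₁ - η₂) * A) ^ 2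
            + (q - 1) ^ 2 * (η₂ * (B - A) - (η₁ - η₂) * A) ^ 2
            + (q - 1) * (8 * (q - 1) * η₂ * (B - A) - 4 * q * (η₁ - η₂) * (A + B)) ^ 2
            + (2 - q) / 9 *
              (18 * (q - 1) * η₂ * (B - A) - 16 * q * (η₁ - η₂) * (A + B)) ^ 2
            + 12 * (q - 1) ^ 2 * (3 * q - 1) * (η₂ * (B - A)) ^ 2
            + (368 * q ^ 2 - 112 * q ^ 3) / 9 * ((η₁ - η₂) * (A - B)) ^ 2
            + 64 * q ^ 2 * (2 - q) / 9 * ((η₁ - η₂) * B) ^ 2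
            + (28 * q ^ 2 * (8 * q - 7) / 9 + 8 * q - 4) * ((η₁ - η₂) * A) ^ 2 := by
          ring
        rw [hEq]
        have := add_nonneg (add_nonneg (add_nonneg (add_nonneg (add_nonneg (add_nonneg
          (add_nonneg (add_nonneg (add_nonneg (add_nonneg hs1 hs2) hs3) hs4) hs5) hs6)
          hs7) hs8) hs9) hs10) hs11
        exact this
      have expand : (b - a) * (η₂ ^ 2 * p2 - η₁ ^ 2 * p1) -
          ((q - 1) / (32 * q ^ 2) * (η₂ * B - η₁ * A) ^ 2
            - 2 * (q - 1)⁻¹ * (η₂ - η₁) ^ 2 * (B ^ 2 + A ^ 2)) =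
          (32 * q ^ 2 * (q - 1) * ((b - a) * (η₂ ^ 2 * p2 - η₁ ^ 2 * p1))
            + 64 * q ^ 2 * (η₂ - η₁) ^ 2 * (B ^ 2 + A ^ 2)
            - (q - 1) ^ 2 * (η₂ * B - η₁ * A) ^ 2) / (32 * q ^ 2 * (q - 1)) := by
        field_simp
        ring
      have hpos := div_nonneg key h32.le
      rw [← sub_nonneg, expand]
      exact hpos
    · -- aligned
      have hb1 : 0 ≤ 32 * q * (q - 1) * η₁ ^ 2 *
          (q * ((b - a) * (p2 - p1)) - 2 * (q - 1) * (B - A) ^ 2) :=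
        mul_nonneg (by positivity) (by linarith)
      have hb2 : 0 ≤ 32 * q ^ 2 * (q - 1) * (2 * η₁ * (η₂ - η₁) + (η₂ - η₁) ^ 2) *
          ((b - a) * p2) :=
        mul_nonneg (mul_nonneg (by positivity) (kq7 hη₁ hee)) hP2
      have hb3 : 0 ≤ (q - 1) ^ 2 * (η₁ * (B - A) - (η₂ - η₁) * B) ^ 2 := by positivity
      have hb4 : 0 ≤ 2 * (q - 1) ^ 2 * (32 * q - 1) * (η₁ * (B - A)) ^ 2 :=
        mul_nonneg (mul_nonneg (by positivity) (by linarith)) (sq_nonneg _)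
      have hb5 : 0 ≤ (62 * q ^ 2 + 4 * q - 2) * ((η₂ - η₁) * B) ^ 2 :=
        mul_nonneg (kq6 hq) (sq_nonneg _)
      have hb6 : 0 ≤ 64 * q ^ 2 * ((η₂ - η₁) * A) ^ 2 := by positivity
      have key : 0 ≤ 32 * q ^ 2 * (q - 1) * ((b - a) * (η₂ ^ 2 * p2 - η₁ ^ 2 * p1))
          + 64 * q ^ 2 * (η₂ - η₁) ^ 2 * (B ^ 2 + A ^ 2)
          - (q - 1) ^ 2 * (η₂ * B - η₁ * A) ^ 2 := by
        have hEq : 32 * q ^ 2 * (q - 1) * ((b - a) * (η₂ ^ 2 * p2 - η₁ ^ 2 * p1))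
            + 64 * q ^ 2 * (η₂ - η₁) ^ 2 * (B ^ 2 + A ^ 2)
            - (q - 1) ^ 2 * (η₂ * B - η₁ * A) ^ 2 =
            32 * q * (q - 1) * η₁ ^ 2 *
              (q * ((b - a) * (p2 - p1)) - 2 * (q - 1) * (B - A) ^ 2)
            + 32 * q ^ 2 * (q - 1) * (2 * η₁ * (η₂ - η₁) + (η₂ - η₁) ^ 2) *
              ((b - a) * p2)
            + (q - 1) ^ 2 * (η₁ * (B - A) - (η₂ - η₁) * B) ^ 2
            + 2 * (q - 1) ^ 2 * (32 * q - 1) * (η₁ * (B - A)) ^ 2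
            + (62 * q ^ 2 + 4 * q - 2) * ((η₂ - η₁) * B) ^ 2
            + 64 * q ^ 2 * ((η₂ - η₁) * A) ^ 2 := by ring
        rw [hEq]
        have := add_nonneg (add_nonneg (add_nonneg (add_nonneg (add_nonneg hb1 hb2)
          hb3) hb4) hb5) hb6
        exact this
      have expand : (b - a) * (η₂ ^ 2 * p2 - η₁ ^ 2 * p1) -
          ((q - 1) / (32 * q ^ 2) * (η₂ * B - η₁ * A) ^ 2
            - 2 * (q - 1)⁻¹ * (η₂ - η₁) ^ 2 * (B ^ 2 + A ^ 2)) =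
          (32 * q ^ 2 * (q - 1) * ((b - a) * (η₂ ^ 2 * p2 - η₁ ^ 2 * p1))
            + 64 * q ^ 2 * (η₂ - η₁) ^ 2 * (B ^ 2 + A ^ 2)
            - (q - 1) ^ 2 * (η₂ * B - η₁ * A) ^ 2) / (32 * q ^ 2 * (q - 1)) := by
        field_simp
        ring
      have hpos := div_nonneg key h32.le
      rw [← sub_nonneg, expand]
      exact hpos

/-- Algebraic inequality (Lemma 3.7 in Kassmann '07). All powers are real powers. -/
theorem algebraic_inequality_three (a b η₁ η₂ q : ℝ) (ha : 0 ≤ a) (hb : 0 ≤ b)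
    (hη₁ : 0 ≤ η₁) (hη₂ : 0 ≤ η₂) (hq : 1 < q) :
    (q - 1) / (32 * q ^ 2) * (η₂ * b ^ (q / 2) - η₁ * a ^ (q / 2)) ^ 2 -
        2 * max 1 (q - 1)⁻¹ * (η₂ - η₁) ^ 2 * (b ^ q + a ^ q) ≤
      (b - a) * (η₂ ^ 2 * b ^ (q - 1) - η₁ ^ 2 * a ^ (q - 1)) := by
  rcases le_total a b with h | h
  · exact main_aux a b η₁ η₂ q ha h hη₁ hη₂ hq
  · have h' := main_aux b a η₂ η₁ q hb h hη₂ hη₁ hq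
    have e1 : (η₁ * a ^ (q / 2) - η₂ * b ^ (q / 2)) ^ 2
        = (η₂ * b ^ (q / 2) - η₁ * a ^ (q / 2)) ^ 2 := by ring
    have e2 : (η₁ - η₂) ^ 2 = (η₂ - η₁) ^ 2 := by ring
    have e3 : (a - b) * (η₁ ^ 2 * a ^ (q - 1) - η₂ ^ 2 * b ^ (q - 1))
        = (b - a) * (η₂ ^ 2 * b ^ (q - 1) - η₁ ^ 2 * a ^ (q - 1)) := by ring
    have e4 : a ^ q + b ^ q = b ^ q + a ^ q := by ring
    rw [e1, e2, e3, e4] at h'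
    exact h'
end

section
/- For all real numbers a, b, x, y: (b − a)(b y² − a x²) ≥ (1/4)(b − a)²(y² + x²) − 4(b² + a²)(y − x)². -/
/-- Algebraic inequality for real numbers. -/
theorem algebraic_inequality_four (a b x y : ℝ) :
    1 / 4 * (b - a) ^ 2 * (y ^ 2 + x ^ 2) - 4 * (b ^ 2 + a ^ 2) * (y - x) ^ 2 ≤
      (b - a) * (b * y ^ 2 - a * x ^ 2) := by
  nlinarith [sq_nonneg ((b-a)*(y+x) + 2*(b+a)*(y-x)), sq_nonneg ((b-a)*(y+x) - 2*(b+a)*(y-x)), sq_nonneg ((b-a)*(y-x)), sq_nonneg ((b+a)*(y-x)), sq_nonneg ((b-a)*(y+x))]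
end
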